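/- In the broadcast evolution graph over l rounds (with 2l+1 levels, including unit-capacity selection edges), there is a feasible l-round broadcast schedule delivering each of k tokens from its source to all its destinations, where each node broadcasts at most one token per round, if and only if k edge-capacity-respecting directed Steiner trees can be simultaneously packed, the i-th tree rooted at the level-0 copy of token i's source with terminals the level-2l copies of token i's destinations. -/
import Mathlib


open Classical in
/-- Token holdings under a broadcast schedule `bcast` (in each round each node
broadcasts at most one token to all its neighbors) on the dynamic network `G`,
where token `i` starts at the node `src i`. -/
noncomputable def bRun {V : Type*} (k : ℕ) (G : ℕ → SimpleGraph V) (src : Fin k → V)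
    (bcast : ℕ → V → Option (Fin k)) : ℕ → V → Finset (Fin k)
  | 0 => fun v => Finset.univ.filter fun i => src i = v
  | r + 1 => fun v =>
      bRun k G src bcast r v ∪
        Finset.univ.filter fun i =>
          ∃ u, (G r).Adj u v ∧ bcast r u = some i ∧ i ∈ bRun k G src bcast r u

lemma bRun_zero {V : Type*} {k : ℕ} {G : ℕ → SimpleGraph V} {src : Fin k → V}
    {bcast : ℕ → V → Option (Fin k)} {v : V} {i : Fin k} :
    i ∈ bRun k G src bcast 0 v ↔ src i = v := by simp [bRun]

lemma bRun_succ {V : Type*} {k : ℕ} {G : ℕ → SimpleGraph V} {src : Fin k → V}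
    {bcast : ℕ → V → Option (Fin k)} {r : ℕ} {v : V} {i : Fin k} :
    i ∈ bRun k G src bcast (r+1) v ↔
      i ∈ bRun k G src bcast r v ∨
        ∃ u, (G r).Adj u v ∧ bcast r u = some i ∧ i ∈ bRun k G src bcast r u := by
  simp [bRun]

lemma bRun_mono {V : Type*} {k : ℕ} {G : ℕ → SimpleGraph V} {src : Fin k → V}
    {bcast : ℕ → V → Option (Fin k)} {r : ℕ} {v : V} {i : Fin k}
    (h : i ∈ bRun k G src bcast r v) : i ∈ bRun k G src bcast (r+1) v :=
  bRun_succ.mpr (Or.inl h)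

open Classical

/-- There is a feasible `l`-round broadcast schedule delivering
each token `i` from its source `src i` to all its destinations `dest i` (each node
broadcasting at most one token it holds per round) **iff** `k` directed Steiner
trees can be packed in the broadcast evolution graph respecting edge capacities.
Vertices of the broadcast evolution graph are pairs `(level, node)` with levels
`0, …, 2l`; the valid edges for round `r+1` (`r < l`) are the infinite-capacity
buffer edges `(2r,v) → (2r+2,v)`, the unit-capacity selection edges
`(2r,v) → (2r+1,v)`, and the unit-capacity broadcast edges `(2r+1,u) → (2r+2,v)`
for `(G r).Adj u v`.  The `i`-th tree `E i` is a set of valid edges forming a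
directed tree rooted at `(0, src i)` (in-degree at most one, every edge reachable
from the root) reaching the terminal `(2l, v)` for every `v ∈ dest i`; unit
capacity means each selection/broadcast edge lies in at most one tree. -/
theorem stmt_16 {V : Type*} (k l : ℕ) (G : ℕ → SimpleGraph V) (src : Fin k → V)
    (dest : Fin k → Finset V) :
    (∃ bcast : ℕ → V → Option (Fin k),
      (∀ r u i, bcast r u = some i → i ∈ bRun k G src bcast r u) ∧
      ∀ i : Fin k, ∀ v ∈ dest i, i ∈ bRun k G src bcast l v) ↔
    (∃ E : Fin k → Set ((ℕ × V) × (ℕ × V)),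
      (∀ i, ∀ e ∈ E i, ∃ r < l,
        (e.1.1 = 2 * r ∧ e.2.1 = 2 * r + 2 ∧ e.1.2 = e.2.2) ∨
        (e.1.1 = 2 * r ∧ e.2.1 = 2 * r + 1 ∧ e.1.2 = e.2.2) ∨
        (e.1.1 = 2 * r + 1 ∧ e.2.1 = 2 * r + 2 ∧ (G r).Adj e.1.2 e.2.2)) ∧
      (∀ e : (ℕ × V) × (ℕ × V), e.2.1 = e.1.1 + 1 → {i | e ∈ E i}.Subsingleton) ∧
      (∀ (i : Fin k) (b : ℕ × V), {a | (a, b) ∈ E i}.Subsingleton) ∧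
      (∀ i, ∀ e ∈ E i,
        Relation.ReflTransGen (fun a b => (a, b) ∈ E i) (0, src i) e.1) ∧
      (∀ i : Fin k, ∀ v ∈ dest i,
        Relation.ReflTransGen (fun a b => (a, b) ∈ E i) (0, src i) (2 * l, v))) := by
  constructor
  · -- Forward: schedule → trees
    rintro ⟨bcast, hval, hdel⟩
    have hx : ∀ (i : Fin k) (r : ℕ) (v : V), i ∉ bRun k G src bcast r v →
        i ∈ bRun k G src bcast (r+1) v →
        ∃ u, (G r).Adj u v ∧ bcast r u = some i ∧ i ∈ bRun k G src bcast r u := by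
      intro i r v h1 h2
      rcases bRun_succ.mp h2 with h | h
      · exact absurd h h1
      · exact h
    choose pick hadj hbc hmem using hx
    set Et : Fin k → Set ((ℕ × V) × (ℕ × V)) := fun i => {e |
      (∃ r w, r < l ∧ i ∈ bRun k G src bcast r w ∧ e = ((2*r, w), (2*r+2, w))) ∨
      (∃ r w, r < l ∧ bcast r w = some i ∧ e = ((2*r, w), (2*r+1, w))) ∨
      (∃ r w, ∃ (h1 : i ∉ bRun k G src bcast r w) (h2 : i ∈ bRun k G src bcast (r+1) w),
        r < l ∧ e = ((2*r+1, pick i r w h1 h2), (2*r+2, w)))} with hEt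
    have hmemEt : ∀ (i : Fin k) e, e ∈ Et i ↔
      ((∃ r w, r < l ∧ i ∈ bRun k G src bcast r w ∧ e = ((2*r, w), (2*r+2, w))) ∨
      (∃ r w, r < l ∧ bcast r w = some i ∧ e = ((2*r, w), (2*r+1, w))) ∨
      (∃ r w, ∃ (h1 : i ∉ bRun k G src bcast r w) (h2 : i ∈ bRun k G src bcast (r+1) w),
        r < l ∧ e = ((2*r+1, pick i r w h1 h2), (2*r+2, w)))) := fun i e => Iff.rfl
    have hbuf : ∀ (i : Fin k) (r : ℕ) (w : V), r < l → i ∈ bRun k G src bcast r w →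
        ((2*r, w), (2*r+2, w)) ∈ Et i :=
      fun i r w hr hm => Or.inl ⟨r, w, hr, hm, rfl⟩
    have hsel : ∀ (i : Fin k) (r : ℕ) (w : V), r < l → bcast r w = some i →
        ((2*r, w), (2*r+1, w)) ∈ Et i :=
      fun i r w hr hb => Or.inr (Or.inl ⟨r, w, hr, hb, rfl⟩)
    have hbro : ∀ (i : Fin k) (r : ℕ) (w : V) (h1 : i ∉ bRun k G src bcast r w)
        (h2 : i ∈ bRun k G src bcast (r+1) w), r < l →
        ((2*r+1, pick i r w h1 h2), (2*r+2, w)) ∈ Et i :=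
      fun i r w h1 h2 hr => Or.inr (Or.inr ⟨r, w, h1, h2, hr, rfl⟩)
    have reach : ∀ (r : ℕ), r ≤ l → ∀ (v : V) (i : Fin k), i ∈ bRun k G src bcast r v →
        Relation.ReflTransGen (fun a b => (a, b) ∈ Et i) (0, src i) (2*r, v) := by
      intro r
      induction r with
      | zero =>
        intro _ v i h
        obtain rfl : src i = v := bRun_zero.mp h
        exact Relation.ReflTransGen.refl
      | succ r ihr =>
        intro hrl v i h
        have e2 : 2*(r+1) = 2*r+2 := by ring
        rw [e2]
        by_cases hp : i ∈ bRun k G src bcast r v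
        · exact (ihr (by omega) v i hp).tail (hbuf i r v (by omega) hp)
        · have hu : i ∈ bRun k G src bcast r (pick i r v hp h) := hmem i r v hp h
          have p1 := ihr (by omega) _ i hu
          have p2 := p1.tail (hsel i r _ (by omega) (hbc i r v hp h))
          exact p2.tail (hbro i r v hp h (by omega))
    refine ⟨Et, ?_, ?_, ?_, ?_, ?_⟩
    · -- validity
      intro i e he
      rcases (hmemEt i e).mp he with ⟨r, w, hr, _, rfl⟩ | ⟨r, w, hr, _, rfl⟩ |
        ⟨r, w, h1, h2, hr, rfl⟩
      · exact ⟨r, hr, Or.inl ⟨rfl, rfl, rfl⟩⟩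
      · exact ⟨r, hr, Or.inr (Or.inl ⟨rfl, rfl, rfl⟩)⟩
      · exact ⟨r, hr, Or.inr (Or.inr ⟨rfl, rfl, hadj i r w h1 h2⟩)⟩
    · -- capacity
      rintro e he i hi j hj
      simp only [Set.mem_setOf_eq] at hi hj
      rcases (hmemEt i e).mp hi with ⟨r, w, hr, hbi, rfl⟩ | ⟨r, w, hr, hbi, rfl⟩ |
        ⟨r, w, h1, h2, hr, rfl⟩
      · simp only [Prod.fst, Prod.snd] at he; omega
      · rcases (hmemEt j _).mp hj with ⟨r', w', hr', hbj, hej⟩ | ⟨r', w', hr', hbj, hej⟩ |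
          ⟨r', w', h1', h2', hr', hej⟩ <;>
          rw [Prod.mk.injEq, Prod.mk.injEq, Prod.mk.injEq] at hej
        · omega
        · obtain ⟨⟨e1, e2⟩, _⟩ := hej
          obtain rfl : r = r' := by omega
          subst e2
          exact Option.some_injective _ (hbi.symm.trans hbj)
        · omega
      · rcases (hmemEt j _).mp hj with ⟨r', w', hr', hbj, hej⟩ | ⟨r', w', hr', hbj, hej⟩ |
          ⟨r', w', h1', h2', hr', hej⟩ <;>
          rw [Prod.mk.injEq, Prod.mk.injEq, Prod.mk.injEq] at hej
        · omega
        · omega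
        · obtain ⟨⟨e1, e2⟩, ⟨e3, e4⟩⟩ := hej
          obtain rfl : r = r' := by omega
          subst e4
          have hb1 := hbc i r w h1 h2
          have hb2 := hbc j r w h1' h2'
          rw [e2] at hb1
          exact Option.some_injective _ (hb1.symm.trans hb2)
    · -- in-degree
      rintro i b a ha a' ha'
      simp only [Set.mem_setOf_eq] at ha ha'
      rcases (hmemEt i _).mp ha with ⟨r, w, hr, hbi, heq⟩ | ⟨r, w, hr, hbi, heq⟩ |
        ⟨r, w, h1, h2, hr, heq⟩ <;>
        rcases (hmemEt i _).mp ha' with ⟨r', w', hr', hbi', heq'⟩ | ⟨r', w', hr', hbi', heq'⟩ |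
          ⟨r', w', h1', h2', hr', heq'⟩ <;>
        rw [Prod.mk.injEq] at heq heq' <;>
        obtain ⟨rfl, hb⟩ := heq <;> obtain ⟨rfl, hb'⟩ := heq' <;>
        rw [hb'] at hb <;> rw [Prod.mk.injEq] at hb <;> obtain ⟨hb1, hb2⟩ := hb
      · obtain rfl : r = r' := by omega
        rw [hb2]
      · omega
      · obtain rfl : r = r' := by omega
        rw [hb2] at h1'
        exact absurd hbi h1'
      · omega
      · obtain rfl : r = r' := by omega
        rw [hb2]
      · omega
      · obtain rfl : r = r' := by omega
        rw [hb2] at hbi'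
        exact absurd hbi' h1
      · omega
      · obtain rfl : r = r' := by omega
        subst hb2
        rfl
    · -- edge reachability
      intro i e he
      rcases (hmemEt i e).mp he with ⟨r, w, hr, hm, rfl⟩ | ⟨r, w, hr, hb, rfl⟩ |
        ⟨r, w, h1, h2, hr, rfl⟩
      · exact reach r hr.le w i hm
      · exact reach r hr.le w i (hval r w i hb)
      · exact (reach r hr.le _ i (hmem i r w h1 h2)).tail
          (hsel i r _ hr (hbc i r w h1 h2))
    · -- terminals
      intro i v hv
      exact reach l le_rfl v i (hdel i v hv)
  · -- Backward: trees → schedule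
    rintro ⟨E, hvalid, hcap, hindeg, hreachE, hterm⟩
    set bc : ℕ → V → Option (Fin k) := fun r u =>
      if h : ∃ i, ((2*r, u), (2*r+1, u)) ∈ E i then some h.choose else none with hbc_def
    have hbc_iff : ∀ (r : ℕ) (u : V) (i : Fin k),
        bc r u = some i ↔ ((2*r, u), (2*r+1, u)) ∈ E i := by
      intro r u i
      constructor
      · intro h
        by_cases hxx : ∃ j, ((2*r, u), (2*r+1, u)) ∈ E j
        · have hh : bc r u = some hxx.choose := by simp [hbc_def, hxx]
          rw [hh] at h
          exact (Option.some_injective _ h) ▸ hxx.choose_spec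
        · simp [hbc_def, hxx] at h
      · intro h
        have hxx : ∃ j, ((2*r, u), (2*r+1, u)) ∈ E j := ⟨i, h⟩
        have h1 : bc r u = some hxx.choose := by simp [hbc_def, hxx]
        have h2 : hxx.choose = i :=
          hcap ((2*r, u), (2*r+1, u)) rfl hxx.choose_spec h
        rw [h1, h2]
    have key : ∀ (i : Fin k) (a : ℕ × V),
        Relation.ReflTransGen (fun a b => (a, b) ∈ E i) (0, src i) a →
        ∀ (r : ℕ) (u : V), (a = (2*r, u) → i ∈ bRun k G src bc r u) ∧
          (a = (2*r+1, u) → ((2*r, u), (2*r+1, u)) ∈ E i ∧ i ∈ bRun k G src bc r u) := by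
      intro i a h
      induction h with
      | refl =>
        intro r u
        constructor
        · rintro heq
          rw [Prod.mk.injEq] at heq
          obtain ⟨h0, hs⟩ := heq
          obtain rfl : r = 0 := by omega
          subst hs
          exact bRun_zero.mpr rfl
        · rintro heq
          rw [Prod.mk.injEq] at heq
          omega
      | tail hsteps hedge ih =>
        rename_i c b
        obtain ⟨s, hs, hforms⟩ := hvalid i (c, b) hedge
        simp only at hforms
        intro r u
        rcases hforms with ⟨hc1, hb1, hcb⟩ | ⟨hc1, hb1, hcb⟩ | ⟨hc1, hb1, hadj⟩
        · -- buffer step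
          constructor
          · intro heq
            have hbr : b.1 = 2*r := by rw [heq]
            have hbu : b.2 = u := by rw [heq]
            obtain rfl : r = s + 1 := by omega
            have hmem := (ih s c.2).1 (Prod.ext hc1 rfl)
            rw [hcb.trans hbu] at hmem
            exact bRun_mono hmem
          · intro heq
            have hbr : b.1 = 2*r+1 := by rw [heq]
            omega
        · -- selection step
          constructor
          · intro heq
            have hbr : b.1 = 2*r := by rw [heq]
            omega
          · intro heq
            have hbr : b.1 = 2*r+1 := by rw [heq]
            have hbu : b.2 = u := by rw [heq]
            have hrs : r = s := by omega
            subst hrs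
            have hcu : c.2 = u := hcb.trans hbu
            have hmem := (ih r c.2).1 (Prod.ext hc1 rfl)
            rw [hcu] at hmem
            have hc' : c = (2*r, u) := Prod.ext hc1 hcu
            have hb' : b = (2*r+1, u) := Prod.ext hbr hbu
            refine ⟨?_, hmem⟩
            rw [← hc', ← hb']
            exact hedge
        · -- broadcast step
          constructor
          · intro heq
            have hbr : b.1 = 2*r := by rw [heq]
            have hbu : b.2 = u := by rw [heq]
            obtain rfl : r = s + 1 := by omega
            have hih := (ih s c.2).2 (Prod.ext hc1 rfl)
            have hbcs : bc s c.2 = some i := (hbc_iff s c.2 i).mpr hih.1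
            refine bRun_succ.mpr (Or.inr ⟨c.2, ?_, hbcs, hih.2⟩)
            rw [← hbu]
            exact hadj
          · intro heq
            have hbr : b.1 = 2*r+1 := by rw [heq]
            omega
    refine ⟨bc, ?_, ?_⟩
    · intro r u i h
      have hedge := (hbc_iff r u i).mp h
      have hre := hreachE i _ hedge
      exact (key i _ hre r u).1 rfl
    · intro i v hv
      exact (key i _ (hterm i v hv) l v).1 rfl
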